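/- Let P be a finite ordered set, G ≤ Aut(P), D, E two G-orbits, (S,B) a primitive pair for the action of G on D, and C a block of the action of G on E such that the C-canonical partition of the blocks of G·S contained in B has more than one nonempty part. Then for all Φ, Ψ ∈ G: if Φ and Ψ induce the same permutation of the conjugates of C and the same permutation of the conjugates of B, then they induce the same permutation of the conjugates of S. -/

import Mathlib

open Pointwise

variable {P : Type*} [PartialOrder P]

/-- Two elements are comparable. -/
def Cmp (a b : P) : Prop := a ≤ b ∨ b ≤ a

/-- `A ◇ B`: `A` is made by `B`. -/
def MadeBy (A B : Set P) : Prop :=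
  (∀ a ∈ A, ∀ b ∈ B, a < b) ∨ (∀ a ∈ A, ∀ b ∈ B, b < a)

/-- `A ∥ B`: no element of `A` is comparable to any element of `B`. -/
def Incomp (A B : Set P) : Prop := ∀ a ∈ A, ∀ b ∈ B, ¬ Cmp a b

/-- `A` and `B` are nontrivially woven. -/
def Woven (A B : Set P) : Prop :=
  (∃ a ∈ A, ∃ b ∈ B, Cmp a b) ∧ (∃ a ∈ A, ∃ b ∈ B, ¬ Cmp a b)

/-- `(S₁, C')` and `(S₂, C')` have the same weaving type relative to `G`. -/
def SameWeave (G : Subgroup (Equiv.Perm P)) (S₁ S₂ C' : Set P) : Prop :=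
  (MadeBy S₁ C' ↔ MadeBy S₂ C') ∧
  (Incomp S₁ C' ↔ Incomp S₂ C') ∧
  (Woven S₁ C' → ∃ Φ ∈ G, Φ • S₁ = S₂ ∧ Φ • C' = C') ∧
  (Woven S₂ C' → ∃ Φ ∈ G, Φ • S₂ = S₁ ∧ Φ • C' = C')

/-- The conjugates of `S` contained in `B`, i.e. `B[Λ*(D)·S]`. -/
def blocksIn (G : Subgroup (Equiv.Perm P)) (S B : Set P) : Set (Set P) :=
  {S' | (∃ σ ∈ G, σ • S = S') ∧ S' ⊆ B}

/-- `(S, B)` is a primitive pair: the group induced on `B[G·S]` by the setwise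
stabilizer of `B` is transitive and admits no nontrivial blocks. -/
def PrimitivePair (G : Subgroup (Equiv.Perm P)) (S B : Set P) : Prop :=
  S ⊆ B ∧ S ≠ B ∧
  (∀ S₁ ∈ blocksIn G S B, ∀ S₂ ∈ blocksIn G S B,
    ∃ σ ∈ G, σ • B = B ∧ σ • S₁ = S₂) ∧
  (∀ Q ⊆ blocksIn G S B,
    (∀ σ ∈ G, σ • B = B →
      (fun T => σ • T) '' Q = Q ∨ ((fun T => σ • T) '' Q) ∩ Q = ∅) →
    Q.Subsingleton ∨ Q = blocksIn G S B)

/-- `C ▶^B S`: the canonical `C`-partition of `B[G·S]` has more than one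
nonempty part. -/
def ControlsVia (G : Subgroup (Equiv.Perm P)) (C B S : Set P) : Prop :=
  ∃ S₁ ∈ blocksIn G S B, ∃ S₂ ∈ blocksIn G S B, ¬ SameWeave G S₁ S₂ C

section Aux

variable {G : Subgroup (Equiv.Perm P)}

lemma perm_le_iff (hmono : ∀ σ ∈ G, ∀ a b : P, a ≤ b → σ a ≤ σ b)
    {σ : Equiv.Perm P} (hσ : σ ∈ G) {a b : P} : σ a ≤ σ b ↔ a ≤ b := by
  constructor
  · intro h
    have := hmono σ⁻¹ (G.inv_mem hσ) _ _ h
    simpa using this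
  · exact hmono σ hσ a b

lemma perm_lt_iff (hmono : ∀ σ ∈ G, ∀ a b : P, a ≤ b → σ a ≤ σ b)
    {σ : Equiv.Perm P} (hσ : σ ∈ G) {a b : P} : σ a < σ b ↔ a < b := by
  rw [lt_iff_le_and_ne, lt_iff_le_and_ne, perm_le_iff hmono hσ]
  simp [σ.injective.ne_iff]

lemma perm_cmp_iff (hmono : ∀ σ ∈ G, ∀ a b : P, a ≤ b → σ a ≤ σ b)
    {σ : Equiv.Perm P} (hσ : σ ∈ G) {a b : P} : Cmp (σ a) (σ b) ↔ Cmp a b := by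
  unfold Cmp
  rw [perm_le_iff hmono hσ, perm_le_iff hmono hσ]

lemma madeBy_smul (hmono : ∀ σ ∈ G, ∀ a b : P, a ≤ b → σ a ≤ σ b)
    {σ : Equiv.Perm P} (hσ : σ ∈ G) {A C : Set P} (h : MadeBy A C) :
    MadeBy (σ • A) (σ • C) := by
  rcases h with h | h
  · left
    rintro a ⟨a', ha', rfl⟩ c ⟨c', hc', rfl⟩
    simpa [Equiv.Perm.smul_def, perm_lt_iff hmono hσ] using h a' ha' c' hc'
  · right
    rintro a ⟨a', ha', rfl⟩ c ⟨c', hc', rfl⟩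
    simpa [Equiv.Perm.smul_def, perm_lt_iff hmono hσ] using h a' ha' c' hc'

lemma madeBy_smul_iff (hmono : ∀ σ ∈ G, ∀ a b : P, a ≤ b → σ a ≤ σ b)
    {σ : Equiv.Perm P} (hσ : σ ∈ G) {A C : Set P} :
    MadeBy (σ • A) (σ • C) ↔ MadeBy A C := by
  refine ⟨fun h => ?_, madeBy_smul hmono hσ⟩
  have := madeBy_smul hmono (G.inv_mem hσ) h
  simpa using this

lemma incomp_smul (hmono : ∀ σ ∈ G, ∀ a b : P, a ≤ b → σ a ≤ σ b)
    {σ : Equiv.Perm P} (hσ : σ ∈ G) {A C : Set P} (h : Incomp A C) :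
    Incomp (σ • A) (σ • C) := by
  rintro a ⟨a', ha', rfl⟩ c ⟨c', hc', rfl⟩
  simpa [Equiv.Perm.smul_def, perm_cmp_iff hmono hσ] using h a' ha' c' hc'

lemma incomp_smul_iff (hmono : ∀ σ ∈ G, ∀ a b : P, a ≤ b → σ a ≤ σ b)
    {σ : Equiv.Perm P} (hσ : σ ∈ G) {A C : Set P} :
    Incomp (σ • A) (σ • C) ↔ Incomp A C := by
  refine ⟨fun h => ?_, incomp_smul hmono hσ⟩
  have := incomp_smul hmono (G.inv_mem hσ) h
  simpa using this

/-- If `θ ∈ G` fixes `C`, then `T` and `θ • T` have the same weave type w.r.t. `C`. -/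
lemma sameWeave_of_fix (hmono : ∀ σ ∈ G, ∀ a b : P, a ≤ b → σ a ≤ σ b)
    {θ : Equiv.Perm P} (hθ : θ ∈ G) (T C : Set P) (hθC : θ • C = C) :
    SameWeave G T (θ • T) C := by
  refine ⟨?_, ?_, ?_, ?_⟩
  · have := madeBy_smul_iff hmono hθ (A := T) (C := C)
    rw [hθC] at this
    exact this.symm
  · have := incomp_smul_iff hmono hθ (A := T) (C := C)
    rw [hθC] at this
    exact this.symm
  · intro _
    exact ⟨θ, hθ, rfl, hθC⟩
  · intro _
    exact ⟨θ⁻¹, G.inv_mem hθ, inv_smul_smul θ T, inv_smul_eq_iff.2 hθC.symm⟩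

/-- The normal "fixing" condition: `θ ∈ G` stabilizes `B` and fixes every conjugate of `C`. -/
def Fixing (G : Subgroup (Equiv.Perm P)) (B C : Set P) (θ : Equiv.Perm P) : Prop :=
  θ ∈ G ∧ θ • B = B ∧ ∀ C' : Set P, (∃ τ ∈ G, τ • C = C') → θ • C' = C'

omit [PartialOrder P] in
lemma Fixing.one {B C : Set P} : Fixing G B C 1 :=
  ⟨G.one_mem, one_smul _ _, fun _ _ => one_smul _ _⟩

omit [PartialOrder P] in
lemma Fixing.mul {B C : Set P} {θ₁ θ₂ : Equiv.Perm P} (h₁ : Fixing G B C θ₁) (h₂ : Fixing G B C θ₂) :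
    Fixing G B C (θ₁ * θ₂) := by
  refine ⟨G.mul_mem h₁.1 h₂.1, ?_, ?_⟩
  · rw [mul_smul, h₂.2.1, h₁.2.1]
  · intro C' hC'
    rw [mul_smul, h₂.2.2 C' hC', h₁.2.2 C' hC']

omit [PartialOrder P] in
lemma Fixing.inv {B C : Set P} {θ : Equiv.Perm P} (h : Fixing G B C θ) : Fixing G B C θ⁻¹ := by
  refine ⟨G.inv_mem h.1, inv_smul_eq_iff.2 h.2.1.symm, ?_⟩
  intro C' hC'
  exact inv_smul_eq_iff.2 (h.2.2 C' hC').symm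

omit [PartialOrder P] in
lemma Fixing.conj {B C : Set P} {θ τ : Equiv.Perm P} (h : Fixing G B C θ) (hτ : τ ∈ G) (hτB : τ • B = B) :
    Fixing G B C (τ * θ * τ⁻¹) := by
  have hτB' : τ⁻¹ • B = B := inv_smul_eq_iff.2 hτB.symm
  refine ⟨G.mul_mem (G.mul_mem hτ h.1) (G.inv_mem hτ), ?_, ?_⟩
  · rw [mul_smul, mul_smul, hτB', h.2.1, hτB]
  · intro C' hC'
    obtain ⟨ρ, hρ, hρC⟩ := hC'
    have hinvC' : τ⁻¹ • C' = (τ⁻¹ * ρ) • C := by rw [mul_smul, hρC]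
    have : θ • (τ⁻¹ • C') = τ⁻¹ • C' := by
      apply h.2.2
      exact ⟨τ⁻¹ * ρ, G.mul_mem (G.inv_mem hτ) hρ, hinvC'.symm⟩
    rw [mul_smul, mul_smul, this, smul_inv_smul]

/-- Key lemma: any `θ` fixing `B` and all conjugates of `C` fixes `S`. -/
lemma fixing_fixes_S (hmono : ∀ σ ∈ G, ∀ a b : P, a ≤ b → σ a ≤ σ b)
    {S B C : Set P} (hSB : S ⊆ B)
    (hprim : PrimitivePair G S B) (hcontrol : ControlsVia G C B S)
    {θ : Equiv.Perm P} (hθ : Fixing G B C θ) : θ • S = S := by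
  classical
  set Q : Set (Set P) := {T | ∃ θ' : Equiv.Perm P, Fixing G B C θ' ∧ θ' • S = T} with hQ
  have hQsub : Q ⊆ blocksIn G S B := by
    rintro T ⟨θ', hθ', rfl⟩
    exact ⟨⟨θ', hθ'.1, rfl⟩, by rw [← hθ'.2.1]; exact Set.smul_set_mono hSB⟩
  have hSQ : S ∈ Q := ⟨1, Fixing.one, one_smul _ _⟩
  have hθSQ : θ • S ∈ Q := ⟨θ, hθ, rfl⟩
  have hQblock : ∀ τ ∈ G, τ • B = B →
      (fun T => τ • T) '' Q = Q ∨ ((fun T => τ • T) '' Q) ∩ Q = ∅ := by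
    intro τ hτ hτB
    by_cases hdisj : ((fun T => τ • T) '' Q) ∩ Q = ∅
    · exact Or.inr hdisj
    left
    obtain ⟨T, hT1, hT2⟩ := Set.nonempty_iff_ne_empty.2 hdisj
    obtain ⟨T₁, ⟨θ₁, hθ₁, hT₁⟩, hTeq⟩ := hT1
    obtain ⟨θ₂, hθ₂, hT₂⟩ := hT2
    have hTeq' : τ • T₁ = T := hTeq
    -- (τ * θ₁) • S = θ₂ • S
    have hkey : (τ * θ₁) • S = θ₂ • S := by
      rw [mul_smul, hT₁, hTeq', hT₂]
    apply Set.eq_of_subset_of_subset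
    · rintro T' ⟨T₀, ⟨θ', hθ', hT₀⟩, hT'eq⟩
      refine ⟨(τ * θ' * θ₁⁻¹ * τ⁻¹) * θ₂, Fixing.mul ((hθ'.mul hθ₁.inv).conj hτ hτB) hθ₂, ?_⟩
      have : ((τ * θ' * θ₁⁻¹ * τ⁻¹) * θ₂) • S = (τ * θ' * θ₁⁻¹ * τ⁻¹) • ((τ * θ₁) • S) := by
        rw [mul_smul, hkey]
      rw [this, ← mul_smul]
      have hgrp : τ * θ' * θ₁⁻¹ * τ⁻¹ * (τ * θ₁) = τ * θ' := by group
      have hT'eq' : τ • T₀ = T' := hT'eq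
      rw [hgrp, mul_smul, hT₀, hT'eq']
    · rintro T' ⟨θ', hθ', hT'⟩
      refine ⟨τ⁻¹ • T', ?_, smul_inv_smul τ T'⟩
      have hτB' : τ⁻¹ • B = B := inv_smul_eq_iff.2 hτB.symm
      refine ⟨(τ⁻¹ * θ' * θ₂⁻¹ * τ) * θ₁, Fixing.mul ?_ hθ₁, ?_⟩
      · have := (hθ'.mul hθ₂.inv).conj (G.inv_mem hτ) hτB'
        simpa [mul_assoc] using this
      · have hkey' : θ₁ • S = τ⁻¹ • (θ₂ • S) := by
          rw [← hkey, mul_smul, inv_smul_smul]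
        have : ((τ⁻¹ * θ' * θ₂⁻¹ * τ) * θ₁) • S = (τ⁻¹ * θ' * θ₂⁻¹ * τ) • (τ⁻¹ • (θ₂ • S)) := by
          rw [mul_smul, hkey']
        rw [this, ← mul_smul, ← mul_smul]
        have hgrp : τ⁻¹ * θ' * θ₂⁻¹ * τ * τ⁻¹ * θ₂ = τ⁻¹ * θ' := by group
        rw [hgrp, mul_smul, hT']
  rcases hprim.2.2.2 Q hQsub hQblock with hsing | hall
  · exact hsing hθSQ hSQ
  · exfalso
    obtain ⟨T₁, hT₁, T₂, hT₂, hne⟩ := hcontrol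
    rw [← hall] at hT₁ hT₂
    obtain ⟨θ₁, hθ₁, hT₁S⟩ := hT₁
    obtain ⟨θ₂, hθ₂, hT₂S⟩ := hT₂
    have hρ : Fixing G B C (θ₂ * θ₁⁻¹) := hθ₂.mul hθ₁.inv
    have hρT : (θ₂ * θ₁⁻¹) • T₁ = T₂ := by
      rw [← hT₁S, ← mul_smul]
      have : θ₂ * θ₁⁻¹ * θ₁ = θ₂ := by group
      rw [this, hT₂S]
    have hρC : (θ₂ * θ₁⁻¹) • C = C := hρ.2.2 C ⟨1, G.one_mem, one_smul _ _⟩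
    have := sameWeave_of_fix hmono hρ.1 T₁ C hρC
    rw [hρT] at this
    exact hne this

end Aux

/-- Lemma `controllemma`: if `C ▶^B S`, then any two automorphisms in `G`
inducing the same permutation on the conjugates of `C` and the same
permutation on the conjugates of `B` induce the same permutation on the
conjugates of `S`. -/
theorem control_determines_action [Fintype P]
    (G : Subgroup (Equiv.Perm P))
    (hmono : ∀ σ ∈ G, ∀ a b : P, a ≤ b → σ a ≤ σ b)
    (d e : P)
    (D : Set P) (hD : D = {y | ∃ σ ∈ G, σ d = y})
    (E : Set P) (hE : E = {y | ∃ σ ∈ G, σ e = y})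
    (S B : Set P) (hSB : S ⊆ B) (hBD : B ⊆ D)
    (hblockS : ∀ σ ∈ G, σ • S = S ∨ (σ • S) ∩ S = ∅)
    (hblockB : ∀ σ ∈ G, σ • B = B ∨ (σ • B) ∩ B = ∅)
    (hprim : PrimitivePair G S B)
    (C : Set P) (hCE : C ⊆ E)
    (hblockC : ∀ σ ∈ G, σ • C = C ∨ (σ • C) ∩ C = ∅)
    (hcontrol : ControlsVia G C B S) :
    ∀ Φ ∈ G, ∀ Ψ ∈ G,
      (∀ C' : Set P, (∃ σ ∈ G, σ • C = C') → Φ • C' = Ψ • C') →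
      (∀ B' : Set P, (∃ σ ∈ G, σ • B = B') → Φ • B' = Ψ • B') →
      (∀ S' : Set P, (∃ σ ∈ G, σ • S = S') → Φ • S' = Ψ • S') := by
  intro Φ hΦ Ψ hΨ hCag hBag S' hS'
  obtain ⟨σ, hσ, rfl⟩ := hS'
  -- Let Θ' = σ⁻¹ * Ψ⁻¹ * Φ * σ; show it is Fixing, hence fixes S.
  set Θ : Equiv.Perm P := σ⁻¹ * (Ψ⁻¹ * Φ) * σ with hΘdef
  have hΘG : Θ ∈ G := G.mul_mem (G.mul_mem (G.inv_mem hσ) (G.mul_mem (G.inv_mem hΨ) hΦ)) hσ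
  have hΘfix : Fixing G B C Θ := by
    refine ⟨hΘG, ?_, ?_⟩
    · have h1 : Φ • (σ • B) = Ψ • (σ • B) := hBag _ ⟨σ, hσ, rfl⟩
      have : Θ • B = σ⁻¹ • (Ψ⁻¹ • (Φ • (σ • B))) := by
        simp only [hΘdef, mul_smul]
      rw [this, h1, inv_smul_smul, inv_smul_smul]
    · intro C' hC'
      obtain ⟨ρ, hρ, hρC⟩ := hC'
      have h1 : Φ • (σ • C') = Ψ • (σ • C') := by
        apply hCag
        exact ⟨σ * ρ, G.mul_mem hσ hρ, by rw [mul_smul, hρC]⟩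
      have : Θ • C' = σ⁻¹ • (Ψ⁻¹ • (Φ • (σ • C'))) := by
        simp only [hΘdef, mul_smul]
      rw [this, h1, inv_smul_smul, inv_smul_smul]
  have hfix : Θ • S = S := fixing_fixes_S hmono hSB hprim hcontrol hΘfix
  have hΘsmul : Θ • S = σ⁻¹ • (Ψ⁻¹ • (Φ • (σ • S))) := by
    simp only [hΘdef, mul_smul]
  have : σ⁻¹ • (Ψ⁻¹ • (Φ • (σ • S))) = S := by rw [← hΘsmul]; exact hfix
  have h2 : Ψ⁻¹ • (Φ • (σ • S)) = σ • S := by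
    have := congrArg (fun X => σ • X) this
    simpa [smul_inv_smul] using this
  calc Φ • σ • S = Ψ • (Ψ⁻¹ • (Φ • (σ • S))) := by rw [smul_inv_smul]
    _ = Ψ • σ • S := by rw [h2]
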